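/- arXiv:0904.4119 — 6 statements merged into one kernel-verified Lean document; each statement's English description precedes it below -/
import Mathlib

section
/- Let L, K be word languages over a finite alphabet A definable in TL[F,F⁻¹], and let φ be a TL[F,F⁻¹] formula such that in every word over A, φ holds at at most one position. Then the word language {a₁…aₙ : there is an index i with a₁⋯aᵢ ∈ L, a_{i+1}⋯aₙ ∈ K, and φ holds in a₁⋯aₙ at position i+1} is definable in TL[F,F⁻¹]. -/
/-- Formulas of the temporal logic TL[F,F⁻¹] over nonempty finite words over `A`. -/
inductive WFormula (A : Type) : Type where
  | letter (a : A) : WFormula A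
  | not (φ : WFormula A) : WFormula A
  | and (φ ψ : WFormula A) : WFormula A
  | F (φ : WFormula A) : WFormula A
  | P (φ : WFormula A) : WFormula A

/-- Satisfaction of a TL[F,F⁻¹] formula at position `i` of the word `w`: a letter holds at
exactly the positions carrying it, `F φ` holds at `i` iff `φ` holds at some position
`j > i`, and `F⁻¹ φ` holds at `i` iff `φ` holds at some position `j < i`. -/
def WSat {A : Type} (w : List A) : ℕ → WFormula A → Prop
  | i, .letter a => w[i]? = some a
  | i, .not φ => ¬ WSat w i φ
  | i, .and φ ψ => WSat w i φ ∧ WSat w i ψ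
  | i, .F φ => ∃ j, i < j ∧ j < w.length ∧ WSat w j φ
  | i, .P φ => ∃ j, j < i ∧ WSat w j φ

/-- A formula is true in a (nonempty) word iff it holds at the first position. -/
def WordSat {A : Type} (w : List A) (φ : WFormula A) : Prop := WSat w 0 φ

/-- A word language (of nonempty words) is definable in TL[F,F⁻¹] if some formula is true
in exactly its words. -/
def WordDefinable {A : Type} (L : Set (List A)) : Prop :=
  ∃ φ : WFormula A, ∀ w : List A, w ≠ [] → (w ∈ L ↔ WordSat w φ)

/-- disjunction -/
def wor {A : Type} (φ ψ : WFormula A) : WFormula A := .not (.and (.not φ) (.not ψ))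

lemma wor_sat {A : Type} (w : List A) (i : ℕ) (φ ψ : WFormula A) :
    WSat w i (wor φ ψ) ↔ WSat w i φ ∨ WSat w i ψ := by
  simp only [wor, WSat]; tauto

/-- relativize to positions strictly before the unique position of `φ` -/
def relP {A : Type} (φ : WFormula A) : WFormula A → WFormula A
  | .letter a => .letter a
  | .not ψ => .not (relP φ ψ)
  | .and ψ χ => .and (relP φ ψ) (relP φ χ)
  | .F ψ => .F (.and (relP φ ψ) (.F φ))
  | .P ψ => .P (relP φ ψ)

/-- relativize to positions at or after the unique position of `φ` -/
def relS {A : Type} (φ : WFormula A) : WFormula A → WFormula A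
  | .letter a => .letter a
  | .not ψ => .not (relS φ ψ)
  | .and ψ χ => .and (relS φ ψ) (relS φ χ)
  | .F ψ => .F (relS φ ψ)
  | .P ψ => .P (.and (relS φ ψ) (wor φ (.P φ)))

lemma relP_correct {A : Type} (w : List A) (φ : WFormula A) (i : ℕ)
    (hi : i < w.length) (hφi : WSat w i φ)
    (huniq : ∀ j < w.length, WSat w j φ → j = i) :
    ∀ (ψ : WFormula A) (j : ℕ), j < i → (WSat w j (relP φ ψ) ↔ WSat (w.take i) j ψ) := by
  intro ψ
  induction ψ with
  | letter a =>
    intro j hj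
    simp only [relP, WSat]
    rw [List.getElem?_take_of_lt hj]
  | not ψ ih =>
    intro j hj
    simp only [relP, WSat]
    rw [ih j hj]
  | and ψ χ ih1 ih2 =>
    intro j hj
    simp only [relP, WSat]
    rw [ih1 j hj, ih2 j hj]
  | F ψ ih =>
    intro j hj
    simp only [relP, WSat]
    constructor
    · rintro ⟨k, hjk, hkw, hψ, m, _hkm, hmw, hm⟩
      have hmi : m = i := huniq m hmw hm
      have hki : k < i := hmi ▸ _hkm
      exact ⟨k, hjk, by simpa [List.length_take] using lt_min hki hkw, (ih k hki).mp hψ⟩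
    · rintro ⟨k, hjk, hkl, hψ⟩
      have hki : k < i := lt_of_lt_of_le hkl (by simp [List.length_take])
      exact ⟨k, hjk, hki.trans hi, (ih k hki).mpr hψ, i, hki, hi, hφi⟩
  | P ψ ih =>
    intro j hj
    simp only [relP, WSat]
    constructor
    · rintro ⟨k, hkj, hψ⟩
      exact ⟨k, hkj, (ih k (hkj.trans hj)).mp hψ⟩
    · rintro ⟨k, hkj, hψ⟩
      exact ⟨k, hkj, (ih k (hkj.trans hj)).mpr hψ⟩

lemma relS_correct {A : Type} (w : List A) (φ : WFormula A) (i : ℕ)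
    (hi : i < w.length) (hφi : WSat w i φ)
    (huniq : ∀ j < w.length, WSat w j φ → j = i) :
    ∀ (ψ : WFormula A) (j : ℕ), i ≤ j → j < w.length →
      (WSat w j (relS φ ψ) ↔ WSat (w.drop i) (j - i) ψ) := by
  intro ψ
  induction ψ with
  | letter a =>
    intro j hij hj
    simp only [relS, WSat]
    rw [List.getElem?_drop, Nat.add_sub_cancel' hij]
  | not ψ ih =>
    intro j hij hj
    simp only [relS, WSat]
    rw [ih j hij hj]
  | and ψ χ ih1 ih2 =>
    intro j hij hj
    simp only [relS, WSat]
    rw [ih1 j hij hj, ih2 j hij hj]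
  | F ψ ih =>
    intro j hij hj
    simp only [relS, WSat]
    constructor
    · rintro ⟨k, hjk, hkw, hψ⟩
      have hik : i ≤ k := hij.trans hjk.le
      refine ⟨k - i, ?_, ?_, (ih k hik hkw).mp hψ⟩
      · omega
      · simp only [List.length_drop]; omega
    · rintro ⟨m, hjm, hmw, hψ⟩
      have hmw' : m < w.length - i := by simpa [List.length_drop] using hmw
      refine ⟨m + i, by omega, by omega, ?_⟩
      have := (ih (m + i) (by omega) (by omega)).mpr
      simpa using this (by simpa using hψ)
  | P ψ ih =>
    intro j hij hj
    simp only [relS, WSat]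
    constructor
    · rintro ⟨k, hkj, hψ, hafter⟩
      have hik : i ≤ k := by
        rcases (wor_sat w k φ (.P φ)).mp hafter with h | ⟨m, hmk, hm⟩
        · exact (huniq k (hkj.trans hj) h).ge
        · have : m = i := huniq m ((hmk.trans hkj).trans hj) hm
          omega
      exact ⟨k - i, by omega, (ih k hik (hkj.trans hj)).mp hψ⟩
    · rintro ⟨m, hmj, hψ⟩
      have hji : i ≤ j := hij
      refine ⟨m + i, by omega, ?_, ?_⟩
      · have := (ih (m + i) (by omega) (by omega)).mpr
        simpa using this (by simpa using hψ)
      · rcases Nat.eq_or_lt_of_le (Nat.le_add_left i m) with h | h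
        · exact (wor_sat w (m + i) φ (.P φ)).mpr (Or.inl (h ▸ hφi))
        · exact (wor_sat w (m + i) φ (.P φ)).mpr (Or.inr ⟨i, by omega, hφi⟩)

/-- composition for words: if `L, K` are TL[F,F⁻¹]-definable word languages
and `φ` holds at at most one position of every word, then
`{a₁…aₙ : ∃ i, a₁⋯aᵢ ∈ L, a_{i+1}⋯aₙ ∈ K, and φ holds in a₁…aₙ at position i+1}`
is TL[F,F⁻¹]-definable.  (Positions are 0-indexed below: the 1-indexed position `i+1`
is index `i`, the prefix `a₁⋯aᵢ` is `w.take i` and the suffix `a_{i+1}⋯aₙ` is `w.drop i`.) -/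
theorem word_composition {A : Type} [Finite A]
    (L K : Set (List A)) (hL : WordDefinable L) (hK : WordDefinable K)
    (φ : WFormula A)
    (hφ : ∀ (w : List A) (i j : ℕ), i < w.length → j < w.length →
      WSat w i φ → WSat w j φ → i = j) :
    WordDefinable {w : List A |
      ∃ i, 1 ≤ i ∧ i < w.length ∧ w.take i ∈ L ∧ w.drop i ∈ K ∧ WSat w i φ} := by
  obtain ⟨α, hα⟩ := hL
  obtain ⟨β, hβ⟩ := hK
  refine ⟨.and (relP φ α) (.F (.and φ (relS φ β))), fun w hw => ?_⟩
  constructor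
  · rintro ⟨i, h1, hiw, hLmem, hKmem, hφi⟩
    have huniq : ∀ j < w.length, WSat w j φ → j = i := fun j hj hsat =>
      hφ w j i hj hiw hsat hφi
    constructor
    · rw [relP_correct w φ i hiw hφi huniq α 0 h1]
      have htne : w.take i ≠ [] := by
        apply List.ne_nil_of_length_pos
        simp only [List.length_take]
        omega
      exact (hα (w.take i) htne).mp hLmem
    · refine ⟨i, h1, hiw, hφi, ?_⟩
      rw [relS_correct w φ i hiw hφi huniq β i le_rfl hiw]
      have hdne : w.drop i ≠ [] := by
        apply List.ne_nil_of_length_pos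
        simp only [List.length_drop]
        omega
      simpa [WordSat] using (hβ (w.drop i) hdne).mp hKmem
  · rintro ⟨h0, i, h1, hiw, hφi, hβi⟩
    have huniq : ∀ j < w.length, WSat w j φ → j = i := fun j hj hsat =>
      hφ w j i hj hiw hsat hφi
    refine ⟨i, h1, hiw, ?_, ?_, hφi⟩
    · have htne : w.take i ≠ [] := by
        apply List.ne_nil_of_length_pos
        simp only [List.length_take]
        omega
      exact (hα (w.take i) htne).mpr ((relP_correct w φ i hiw hφi huniq α 0 h1).mp h0)
    · have hdne : w.drop i ≠ [] := by
        apply List.ne_nil_of_length_pos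
        simp only [List.length_drop]
        omega
      refine (hβ (w.drop i) hdne).mpr ?_
      have := (relS_correct w φ i hiw hφi huniq β i le_rfl hiw).mp hβi
      simpa [WordSat] using this
end

section
/- There exists a finite forest algebra (H,V) in which the relation ⊣ is not transitive: there are u, v, w ∈ V with u ⊣ v and v ⊣ w but not u ⊣ w. -/
/-- A forest algebra `(H, V)`: a semigroup `(H, +)`, a monoid `(V, ·)` with unit `□`,
a faithful monoid action of `V` on `H`, and mixed operations `h + v` and `v + h`. -/
structure ForestAlgebra (H V : Type) where
  addH : H → H → H
  mulV : V → V → V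
  unit : V
  act : V → H → H
  addL : H → V → V
  addR : V → H → V
  addH_assoc : ∀ f g h, addH (addH f g) h = addH f (addH g h)
  mulV_assoc : ∀ u v w, mulV (mulV u v) w = mulV u (mulV v w)
  unit_mul : ∀ v, mulV unit v = v
  mul_unit : ∀ v, mulV v unit = v
  act_unit : ∀ h, act unit h = h
  act_mul : ∀ v w h, act (mulV v w) h = act v (act w h)
  faithful : ∀ v w, (∀ h, act v h = act w h) → v = w
  addL_act : ∀ h v g, act (addL h v) g = addH h (act v g)
  addR_act : ∀ v h g, act (addR v h) g = addH (act v g) h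

namespace ForestAlgebra

variable {H V : Type}

/-- `v^n` in the vertical monoid. -/
def powV (FA : ForestAlgebra H V) (v : V) : ℕ → V
  | 0 => FA.unit
  | n + 1 => FA.mulV v (FA.powV v n)

/-- The relation `u ⊣ w`: `u = v₀v₁⋯vₙ` and `w = v₀(h₁+v₁)⋯(hₙ+vₙ)` for some
`v₀,…,vₙ ∈ V` and `h₁,…,hₙ ∈ H`. -/
def Strip (FA : ForestAlgebra H V) (u w : V) : Prop :=
  ∃ (v0 : V) (L : List (H × V)),
    u = L.foldl (fun acc hv => FA.mulV acc hv.2) v0 ∧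
    w = L.foldl (fun acc hv => FA.mulV acc (FA.addL hv.1 hv.2)) v0

/-- Identity (1): `h + h = h` and `g + h = h + g`. -/
def Id1 (FA : ForestAlgebra H V) : Prop :=
  (∀ h, FA.addH h h = h) ∧ (∀ g h, FA.addH g h = FA.addH h g)

/-- Identity (2): `(vw)^ω = (vw)^ω w (vw)^ω`, where an identity involving `ω`-powers
asserts equality for all sufficiently large exponents. -/
def Id2 (FA : ForestAlgebra H V) : Prop :=
  ∀ v w : V, ∃ m, ∀ n ≥ m,
    FA.powV (FA.mulV v w) n =
      FA.mulV (FA.mulV (FA.powV (FA.mulV v w) n) w) (FA.powV (FA.mulV v w) n)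

/-- Identity (3): `(u₁w₁)^ω (u₂w₂)^ω = (u₁w₁)^ω u₁ w₂ (u₂w₂)^ω` whenever
`u₁ ⊣ u₂` and `w₁ ⊣ w₂`. -/
def Id3 (FA : ForestAlgebra H V) : Prop :=
  ∀ u1 u2 w1 w2 : V, FA.Strip u1 u2 → FA.Strip w1 w2 →
    ∃ m, ∀ n ≥ m,
      FA.mulV (FA.powV (FA.mulV u1 w1) n) (FA.powV (FA.mulV u2 w2) n) =
        FA.mulV (FA.mulV (FA.mulV (FA.powV (FA.mulV u1 w1) n) u1) w2)
          (FA.powV (FA.mulV u2 w2) n)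

/-- The context type `v` is reachable from `w` if `v = wu` for some `u ∈ V`. -/
def CtxReach (FA : ForestAlgebra H V) (w v : V) : Prop := ∃ u, v = FA.mulV w u

/-- Two context types are in the same context component if each is reachable from the other. -/
def SameCC (FA : ForestAlgebra H V) (v w : V) : Prop := FA.CtxReach v w ∧ FA.CtxReach w v

/-- The forest type `g` is reachable from `h` if `g = uh` for some `u ∈ V`. -/
def HReach (FA : ForestAlgebra H V) (h g : H) : Prop := ∃ u, g = FA.act u h

/-- Two forest types are in the same forest component if each is reachable from the other. -/
def SameFC (FA : ForestAlgebra H V) (g h : H) : Prop := FA.HReach g h ∧ FA.HReach h g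

end ForestAlgebra

/-- The semigroup on `Fin 3`: `0` is absorbing, `{1,2}` is `ℤ/2` with `1` neutral. -/
def add3 (x y : Fin 3) : Fin 3 := if x = 0 ∨ y = 0 then 0 else if x = y then 1 else 2

/-- A concrete finite forest algebra: `H = Fin 3`, `V` = all functions `H → H`. -/
def FA3 : ForestAlgebra (Fin 3) (Fin 3 → Fin 3) where
  addH := add3
  mulV := fun a b => a ∘ b
  unit := id
  act := fun v h => v h
  addL := fun h v g => add3 h (v g)
  addR := fun v h g => add3 (v g) h
  addH_assoc := by decide
  mulV_assoc := fun _ _ _ => rfl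
  unit_mul := fun _ => rfl
  mul_unit := fun _ => rfl
  act_unit := fun _ => rfl
  act_mul := fun _ _ _ => rfl
  faithful := fun _ _ hvw => funext hvw
  addL_act := fun _ _ _ => rfl
  addR_act := fun _ _ _ => rfl

/-- Invariant: if `a` is a permutation then `b` is a permutation or constant;
otherwise `b` is not a permutation. -/
def predB (a b : Fin 3 → Fin 3) : Bool :=
  if decide (a 0 ≠ a 1 ∧ a 0 ≠ a 2 ∧ a 1 ≠ a 2) then
    (decide (b 0 ≠ b 1 ∧ b 0 ≠ b 2 ∧ b 1 ≠ b 2)) || (decide (b 0 = b 1 ∧ b 1 = b 2))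
  else !(decide (b 0 ≠ b 1 ∧ b 0 ≠ b 2 ∧ b 1 ≠ b 2))

theorem pred_refl : ∀ v : Fin 3 → Fin 3, predB v v = true := by decide

set_option maxHeartbeats 2000000 in
theorem pred_step : ∀ (a b f : Fin 3 → Fin 3) (h : Fin 3),
    predB a b = true → predB (a ∘ f) (fun g => b (add3 h (f g))) = true := by decide

theorem pred_fold : ∀ (L : List (Fin 3 × (Fin 3 → Fin 3))) (a b : Fin 3 → Fin 3),
    predB a b = true →
    predB (L.foldl (fun acc hv => FA3.mulV acc hv.2) a)
          (L.foldl (fun acc hv => FA3.mulV acc (FA3.addL hv.1 hv.2)) b) = true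
  | [], _, _, h => h
  | (p :: L), a, b, h => pred_fold L _ _ (pred_step a b p.2 p.1 h)

/-- There exists a finite forest algebra `(H,V)` in which the relation `⊣`
is not transitive. -/
theorem strip_not_transitive :
    ∃ (H V : Type) (_ : Finite H) (_ : Finite V) (FA : ForestAlgebra H V) (u v w : V),
      FA.Strip u v ∧ FA.Strip v w ∧ ¬ FA.Strip u w := by
  refine ⟨Fin 3, Fin 3 → Fin 3, inferInstance, inferInstance, FA3,
    ![1,0,2], (fun _ => 0), ![0,1,1], ?_, ?_, ?_⟩
  · exact ⟨![0,2,1], [((0 : Fin 3), ![2,0,1])], by decide, by decide⟩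
  · exact ⟨![0,0,1], [((2 : Fin 3), ![0,1,1])], by decide, by decide⟩
  · rintro ⟨v0, L, hu, hw⟩
    have h := pred_fold L v0 v0 (pred_refl v0)
    rw [← hu, ← hw] at h
    have : predB ![1,0,2] ![0,1,1] = false := by decide
    rw [this] at h
    exact Bool.false_ne_true h
end

section
/- There exists a finite forest algebra satisfying identities (1) and (2) but not identity (3). -/
namespace CounterEx

def actF : Fin 7 → Fin 3 → Fin 3 :=
  ![![0,0,0], ![0,1,0], ![0,1,2], ![1,1,0], ![1,1,1], ![1,1,2], ![2,2,2]]

def mulF : Fin 7 → Fin 7 → Fin 7 :=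
  ![![0,0,0,0,0,0,0], ![0,1,1,3,4,3,0], ![0,1,2,3,4,5,6], ![4,4,3,4,4,3,0],
    ![4,4,4,4,4,4,4], ![4,4,5,4,4,5,6], ![6,6,6,6,6,6,6]]

def addLF : Fin 3 → Fin 7 → Fin 7 :=
  ![![0,1,2,3,4,5,6], ![4,4,5,4,4,5,6], ![6,6,6,6,6,6,6]]

def addRF : Fin 7 → Fin 3 → Fin 7 :=
  ![![0,4,6], ![1,4,6], ![2,5,6], ![3,4,6], ![4,4,6], ![5,5,6], ![6,6,6]]

def fa : ForestAlgebra (Fin 3) (Fin 7) where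
  addH := max
  mulV := mulF
  unit := 2
  act := actF
  addL := addLF
  addR := addRF
  addH_assoc := by decide
  mulV_assoc := by decide
  unit_mul := by decide
  mul_unit := by decide
  act_unit := by decide
  act_mul := by decide
  faithful := by decide
  addL_act := by decide
  addR_act := by decide

theorem stab2 : ∀ x : Fin 7, fa.powV x 2 = fa.powV x 3 := by decide

theorem stab : ∀ (x : Fin 7) (n : ℕ), 2 ≤ n → fa.powV x n = fa.powV x 2 := by
  intro x n hn
  induction n with
  | zero => omega
  | succ k ih =>
    rcases Nat.lt_or_ge k 2 with hk | hk
    · interval_cases k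
      · omega
      · exact rfl
    · show fa.mulV x (fa.powV x k) = fa.powV x 2
      rw [ih hk]; exact (stab2 x).symm

theorem id2key : ∀ v w : Fin 7,
    fa.powV (fa.mulV v w) 2 =
      fa.mulV (fa.mulV (fa.powV (fa.mulV v w) 2) w) (fa.powV (fa.mulV v w) 2) := by
  decide

theorem strip1 : fa.Strip 2 5 := ⟨2, [(1, 2)], by decide, by decide⟩

theorem strip2 : fa.Strip 1 0 := ⟨1, [(2, 2)], by decide, by decide⟩

end CounterEx

/-- There exists a finite forest algebra satisfying identities (1) and (2)
but not identity (3). -/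
theorem exists_algebra_id1_id2_not_id3 :
    ∃ (H V : Type) (_ : Finite H) (_ : Finite V) (FA : ForestAlgebra H V),
      FA.Id1 ∧ FA.Id2 ∧ ¬ FA.Id3 := by
  refine ⟨Fin 3, Fin 7, inferInstance, inferInstance, CounterEx.fa, ⟨by decide, by decide⟩, ?_, ?_⟩
  · intro v w
    exact ⟨2, fun n hn => by rw [CounterEx.stab _ _ hn]; exact CounterEx.id2key v w⟩
  · intro h3
    obtain ⟨m, hm⟩ := h3 2 5 1 0 CounterEx.strip1 CounterEx.strip2
    have h := hm (m + 2) (by omega)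
    rw [CounterEx.stab (CounterEx.fa.mulV 2 1) _ (by omega), CounterEx.stab (CounterEx.fa.mulV 5 0) _ (by omega)] at h
    exact absurd h (by decide)
end

section
/- Let (H,V) be a finite forest algebra satisfying identity (2). If the context types v, w, and vu are all in the same context component, then wu is also in that context component. -/
/-- In a finite forest algebra satisfying identity (2), if the context types
`v`, `w` and `vu` are all in the same context component, then so is `wu`. -/
theorem mul_mem_context_component {H V : Type} [Finite H] [Finite V]
    (FA : ForestAlgebra H V) (h2 : FA.Id2) (v w u : V)
    (hvw : FA.SameCC v w) (hvvu : FA.SameCC v (FA.mulV v u)) :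
    FA.SameCC v (FA.mulV w u) := by
  obtain ⟨⟨s, hs⟩, ⟨t, ht⟩⟩ := hvw
  obtain ⟨-, ⟨a, ha⟩⟩ := hvvu
  set q := FA.mulV u (FA.mulV a s) with hq
  obtain ⟨m, hm⟩ := h2 t q
  set c := FA.mulV t q with hc
  have hwc : FA.mulV w c = w := by
    simp only [hc, hq, ← FA.mulV_assoc]
    rw [← ht, ← ha, ← hs]
  have hpow : ∀ n, FA.mulV w (FA.powV c n) = w := by
    intro n
    induction n with
    | zero => simp [ForestAlgebra.powV, FA.mul_unit]
    | succ k ih => rw [ForestAlgebra.powV, ← FA.mulV_assoc, hwc, ih]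
  have key : w = FA.mulV (FA.mulV w q) (FA.powV c m) := by
    conv_lhs => rw [← hpow m, hm m le_rfl]
    rw [← FA.mulV_assoc, ← FA.mulV_assoc, hpow m]
  constructor
  · exact ⟨FA.mulV s u, by rw [hs, FA.mulV_assoc]⟩
  · refine ⟨FA.mulV (FA.mulV a s) (FA.mulV (FA.powV c m) t), ?_⟩
    rw [ht]
    conv_lhs => rw [key]
    simp only [hq, FA.mulV_assoc]
end

section
/- Let (H,V) be a finite forest algebra satisfying identity (2). If the forest types g, h, and vg are all in the same forest component, then vh is also in that forest component. -/
section AuxLemmas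

/-- The vertical monoid of a forest algebra, packaged as a `Monoid` structure. -/
def ForestAlgebra.toMonoid {H V : Type} (FA : ForestAlgebra H V) : Monoid V where
  mul := FA.mulV
  one := FA.unit
  mul_assoc := FA.mulV_assoc
  one_mul := FA.unit_mul
  mul_one := FA.mul_unit

private lemma conjPowAux {M : Type*} [Monoid M] (s t : M) :
    ∀ n : ℕ, s * (t * s) ^ n = (s * t) ^ n * s := by
  intro n
  induction n with
  | zero => simp
  | succ n ih =>
    rw [pow_succ', pow_succ', ← mul_assoc, ← mul_assoc s t s, mul_assoc (s * t) s ((t * s) ^ n),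
      ih, ← mul_assoc]

private lemma exists_idem_pow_aux {M : Type*} [Monoid M] (x : M) (i p : ℕ) (hp : 1 ≤ p)
    (hip : x ^ (i + p) = x ^ i) : ∃ k, 1 ≤ k ∧ ∀ j, 1 ≤ j → x ^ (j * k) = x ^ k := by
  have hstep : ∀ n, i ≤ n → x ^ (n + p) = x ^ n := by
    intro n hn
    obtain ⟨t, rfl⟩ := Nat.exists_eq_add_of_le hn
    have h1 : i + t + p = (i + p) + t := by omega
    rw [h1, pow_add, hip, ← pow_add]
  have hmult : ∀ d n, i ≤ n → x ^ (n + d * p) = x ^ n := by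
    intro d
    induction d with
    | zero => intro n _; simp
    | succ d ih =>
      intro n hn
      have h1 : n + (d + 1) * p = (n + p) + d * p := by ring
      rw [h1, ih (n + p) (by omega), hstep n hn]
  refine ⟨(i + 1) * p, Nat.one_le_iff_ne_zero.mpr (by positivity), ?_⟩
  intro j hj
  obtain ⟨j', rfl⟩ : ∃ j', j = j' + 1 := ⟨j - 1, by omega⟩
  have h1 : (j' + 1) * ((i + 1) * p) = (i + 1) * p + (j' * (i + 1)) * p := by ring
  rw [h1]
  exact hmult (j' * (i + 1)) ((i + 1) * p) (by nlinarith)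

private lemma exists_idem_pow {M : Type*} [Monoid M] [Finite M] (x : M) :
    ∃ k, 1 ≤ k ∧ ∀ j, 1 ≤ j → x ^ (j * k) = x ^ k := by
  obtain ⟨i, j, hne, heq⟩ := Finite.exists_ne_map_eq_of_infinite (fun n : ℕ => x ^ n)
  have heq : x ^ i = x ^ j := heq
  rcases Nat.lt_or_ge i j with hij | hij
  · refine exists_idem_pow_aux x i (j - i) (by omega) ?_
    rw [show i + (j - i) = j by omega]; exact heq.symm
  · have hji : j < i := by omega
    refine exists_idem_pow_aux x j (i - j) (by omega) ?_
    rw [show j + (i - j) = i by omega]; exact heq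

end AuxLemmas

/-- In a finite forest algebra satisfying identity (2), if the forest types
`g`, `h` and `vg` are all in the same forest component, then so is `vh`. -/
theorem act_mem_forest_component {H V : Type} [Finite H] [Finite V]
    (FA : ForestAlgebra H V) (h2 : FA.Id2) (g h : H) (v : V)
    (hgh : FA.SameFC g h) (hgvg : FA.SameFC g (FA.act v g)) :
    FA.SameFC g (FA.act v h) := by
  
  letI : Monoid V := FA.toMonoid
  have hM : ∀ x y : V, FA.mulV x y = x * y := fun _ _ => rfl
  have hAct : ∀ (x y : V) (f : H), FA.act (x * y) f = FA.act x (FA.act y f) :=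
    fun x y f => FA.act_mul x y f
  have hpow : ∀ (x : V) (n : ℕ), FA.powV x n = x ^ n := by
    intro x n
    induction n with
    | zero => rfl
    | succ n ih =>
      show FA.mulV x (FA.powV x n) = x ^ (n + 1)
      rw [ih, pow_succ']; rfl
  have hId2 : ∀ p q : V, ∃ m, ∀ n ≥ m, (p * q) ^ n = (p * q) ^ n * q * (p * q) ^ n := by
    intro p q
    obtain ⟨m, hm⟩ := h2 p q
    refine ⟨m, fun n hn => ?_⟩
    have := hm n hn
    simpa only [hpow, hM] using this
  obtain ⟨a, ha⟩ := hgh.1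
  obtain ⟨b, hb⟩ := hgh.2
  obtain ⟨u, hu⟩ := hgvg.2
  set w₀ : V := (a * u) * (v * b) with hw₀def
  have hw₀h : FA.act w₀ h = h := by
    rw [hw₀def, hAct, hAct, hAct, ← hb, ← hu, ← ha]
  obtain ⟨k, hk1, hk⟩ := exists_idem_pow w₀
  set F : V := w₀ ^ k with hFdef
  have hFF : F * F = F := by
    have h2k : w₀ ^ (2 * k) = w₀ ^ k := hk 2 (by omega)
    calc F * F = w₀ ^ (k + k) := (pow_add w₀ k k).symm
      _ = w₀ ^ (2 * k) := by rw [two_mul]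
      _ = F := h2k
  have hFN : ∀ n, F ^ (n + 1) = F := by
    intro n
    induction n with
    | zero => exact pow_one F
    | succ n ih => rw [pow_succ, ih, hFF]
  have hFh : FA.act F h = h := by
    have key : ∀ n, FA.act (w₀ ^ n) h = h := by
      intro n
      induction n with
      | zero => exact FA.act_unit h
      | succ n ih => rw [pow_succ', hAct, ih, hw₀h]
    exact key k
  -- F = F * b * F
  obtain ⟨m₁, hm₁⟩ := hId2 ((a * u) * v) b
  have hB : F = F * b * F := by
    have hn : (m₁ + 1) * k ≥ m₁ := by nlinarith
    have := hm₁ ((m₁ + 1) * k) hn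
    rw [mul_assoc (a * u) v b] at this
    rw [← hw₀def] at this
    rw [hk (m₁ + 1) (by omega)] at this
    exact this
  -- F = F * (v * b) * F
  obtain ⟨m₂, hm₂⟩ := hId2 (a * u) (v * b)
  have hC : F = F * (v * b) * F := by
    have hn : (m₂ + 1) * k ≥ m₂ := by nlinarith
    have := hm₂ ((m₂ + 1) * k) hn
    rw [← hw₀def] at this
    rw [hk (m₂ + 1) (by omega)] at this
    exact this
  -- F g = h
  have hFg : FA.act F g = h := by
    calc FA.act F g = FA.act F (FA.act b h) := by rw [← hb]
      _ = FA.act (F * b) h := (hAct F b h).symm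
      _ = FA.act (F * b) (FA.act F h) := by rw [hFh]
      _ = FA.act (F * b * F) h := (hAct (F * b) F h).symm
      _ = FA.act F h := by rw [← hB]
      _ = h := hFh
  -- key products
  have hst : (F * v) * (b * F) = F := by
    calc (F * v) * (b * F) = F * (v * b) * F := by simp only [mul_assoc]
      _ = F := hC.symm
  have hts : (b * F) * (F * v) = b * (F * v) := by
    rw [mul_assoc, ← mul_assoc F F v, hFF]
  have hFs : F * (F * v) = F * v := by rw [← mul_assoc, hFF]
  have htF : (b * F) * F = b * F := by rw [mul_assoc, hFF]
  obtain ⟨m₃, hm₃⟩ := hId2 b (F * v)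
  set N : ℕ := m₃ + 1 with hNdef
  set z : V := b * (F * v) with hzdef
  have hzid : z ^ N = z ^ N * (F * v) * z ^ N := hm₃ N (by omega)
  have hFNN : F ^ N = F := by rw [hNdef]; exact hFN m₃
  have hsz : (F * v) * z ^ N = F * v := by
    calc (F * v) * z ^ N = (F * v) * ((b * F) * (F * v)) ^ N := by rw [hts]
      _ = ((F * v) * (b * F)) ^ N * (F * v) := conjPowAux (F * v) (b * F) N
      _ = F ^ N * (F * v) := by rw [hst]
      _ = F * (F * v) := by rw [hFNN]
      _ = F * v := hFs
  have hzt : z ^ N * (b * F) = b * F := by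
    calc z ^ N * (b * F) = ((b * F) * (F * v)) ^ N * (b * F) := by rw [hts]
      _ = (b * F) * ((F * v) * (b * F)) ^ N := (conjPowAux (b * F) (F * v) N).symm
      _ = (b * F) * F ^ N := by rw [hst]
      _ = (b * F) * F := by rw [hFNN]
      _ = b * F := htF
  have hFvF : F = (F * v) * F := by
    calc F = (F * v) * (b * F) := hst.symm
      _ = ((F * v) * z ^ N) * (b * F) := by rw [hsz]
      _ = ((F * v) * (z ^ N * (F * v) * z ^ N)) * (b * F) := by rw [← hzid]
      _ = ((F * v) * z ^ N) * ((F * v) * (z ^ N * (b * F))) := by simp only [mul_assoc]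
      _ = (F * v) * ((F * v) * (b * F)) := by rw [hsz, hzt]
      _ = (F * v) * F := by rw [hst]
  -- F (v h) = h
  have hFvh : FA.act F (FA.act v h) = h := by
    calc FA.act F (FA.act v h) = FA.act F (FA.act v (FA.act F g)) := by rw [hFg]
      _ = FA.act F (FA.act (v * F) g) := by rw [hAct v F g]
      _ = FA.act (F * (v * F)) g := (hAct F (v * F) g).symm
      _ = FA.act F g := by rw [← mul_assoc, ← hFvF]
      _ = h := hFg
  refine ⟨⟨v * a, ?_⟩, ⟨b * F, ?_⟩⟩
  · rw [hAct, ← ha]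
  · rw [hAct, hFvh, ← hb]
end

section
/- Let V be a finite monoid such that for all v, w ∈ V and all sufficiently large n, (vw)ⁿ = (vw)ⁿ w (vw)ⁿ. Then V is aperiodic: for every v ∈ V and all sufficiently large n, vⁿ = vⁿ⁺¹. -/
/-- Let `V` be a finite monoid such that for all `v, w ∈ V` and all
sufficiently large `n`, `(vw)ⁿ = (vw)ⁿ w (vw)ⁿ`. Then `V` is aperiodic: for every `v ∈ V`
and all sufficiently large `n`, `vⁿ = vⁿ⁺¹`. -/
theorem aperiodic_of_DA_identity {V : Type} [Monoid V] [Finite V]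
    (h : ∀ v w : V, ∃ m, ∀ n ≥ m, (v * w) ^ n = (v * w) ^ n * w * (v * w) ^ n) :
    ∀ v : V, ∃ m, ∀ n ≥ m, v ^ n = v ^ (n + 1) := by
  intro v
  obtain ⟨m, hm⟩ := h 1 v
  have key : ∀ n ≥ m, v ^ n = v ^ (n + (n + 1)) := by
    intro n hn
    have := hm n hn
    simp only [one_mul] at this
    calc v ^ n = v ^ n * v * v ^ n := this
      _ = v ^ n * (v ^ n * v) := by
          rw [mul_assoc, ← pow_succ, ← pow_succ']
      _ = v ^ (n + (n + 1)) := by rw [← pow_succ, ← pow_add]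
  have shift : ∀ a p, v ^ a = v ^ (a + p) → ∀ b ≥ a, v ^ b = v ^ (b + p) := by
    intro a p hap b hb
    obtain ⟨c, rfl⟩ := Nat.exists_eq_add_of_le hb
    calc v ^ (a + c) = v ^ a * v ^ c := pow_add v a c
      _ = v ^ (a + p) * v ^ c := by rw [hap]
      _ = v ^ (a + p + c) := (pow_add v (a + p) c).symm
      _ = v ^ (a + c + p) := by ring_nf
  refine ⟨m + 1, fun K hK => ?_⟩
  have a1 := shift m (m + 1) (key m le_rfl) (K + 1) (by omega)
  have a2 := shift (m + 1) (m + 2) (key (m + 1) (by omega)) K hK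
  rw [a2, a1]
  congr 1
  omega
end
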